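/- Let H be a complex Hilbert space, n ∈ ℕ, and A₁,…,Aₙ ∈ B(H) such that each Aⱼ is normal and the Aⱼ mutually commute. Let T : B(H) → B(H) be the continuous linear map T(X) = Σ_{j=1}^n Aⱼ* X Aⱼ. Then the spectral radius of T equals ‖Σ_{j=1}^n Aⱼ* Aⱼ‖. -/

import Mathlib

open ContinuousLinearMap

open NormedSpace in
private lemma exp_mul_exp_neg'' {A : Type*} [NormedRing A] [NormedAlgebra ℂ A]
    [CompleteSpace A] (x : A) : exp x * exp (-x) = 1 := by
  letI : NormedAlgebra ℚ A := NormedAlgebra.restrictScalars ℚ ℂ A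
  rw [← exp_add_of_commute (Commute.refl x).neg_right, add_neg_cancel, exp_zero]

open NormedSpace in
private lemma exp_neg_mul_exp'' {A : Type*} [NormedRing A] [NormedAlgebra ℂ A]
    [CompleteSpace A] (x : A) : exp (-x) * exp x = 1 := by
  letI : NormedAlgebra ℚ A := NormedAlgebra.restrictScalars ℚ ℂ A
  rw [← exp_add_of_commute (Commute.refl x).neg_left, neg_add_cancel, exp_zero]

open NormedSpace in
private lemma norm_exp_skew_le' {A : Type*} [NormedRing A] [StarRing A] [CStarRing A]
    [NormedAlgebra ℂ A] [CompleteSpace A] [ContinuousStar A] (a : A) (ha : star a = -a) :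
    ‖exp a‖ ≤ 1 := by
  letI : NormedAlgebra ℚ A := NormedAlgebra.restrictScalars ℚ ℂ A
  have h1 : star (exp a) * exp a = 1 := by
    rw [star_exp, ha, exp_neg_mul_exp'']
  have h2 : ‖exp a‖ * ‖exp a‖ = ‖(1 : A)‖ := by
    rw [← CStarRing.norm_star_mul_self, h1]
  have h3 : ‖(1 : A)‖ * ‖(1 : A)‖ = ‖(1 : A)‖ := by
    conv_lhs => rw [← CStarRing.norm_star_mul_self (x := (1 : A))]
    rw [star_one, one_mul]
  nlinarith [norm_nonneg (exp a), norm_nonneg (1 : A),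
    mul_self_nonneg (‖exp a‖ - 1), mul_self_nonneg (‖(1 : A)‖ - 1)]

open NormedSpace in
/-- Fuglede's theorem: if `N` is normal and commutes with `B`, then `star N` commutes
with `B`. -/
private lemma fuglede' {A : Type*} [NormedRing A] [StarRing A] [CStarRing A]
    [NormedAlgebra ℂ A] [CompleteSpace A] [StarModule ℂ A] [ContinuousStar A]
    {N B : A} (hN : IsStarNormal N) (hc : Commute N B) :
    Commute (star N) B := by
  letI : NormedAlgebra ℚ A := NormedAlgebra.restrictScalars ℚ ℂ A
  have hNN : Commute (star N) N := hN.star_comm_self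
  set F : ℂ → A := fun z => exp (z • star N) * B * exp (-(z • star N)) with hF
  have hbound : ∀ z : ℂ, ‖F z‖ ≤ ‖B‖ := by
    intro z
    set a : A := z • star N - (starRingEnd ℂ z) • N with ha
    have hskew : star a = -a := by
      simp [ha, star_smul, neg_sub]
    have hcomm1 : Commute a ((starRingEnd ℂ z) • N) := by
      refine Commute.sub_left ?_ ?_
      · exact (hNN.smul_left z).smul_right _
      · exact ((Commute.refl N).smul_left _).smul_right _
    have hsplit : exp (z • star N) = exp a * exp ((starRingEnd ℂ z) • N) := by
      rw [← exp_add_of_commute hcomm1, ha, sub_add_cancel]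
    have hsplit2 : exp (-(z • star N)) =
        exp (-((starRingEnd ℂ z) • N)) * exp (-a) := by
      rw [← exp_add_of_commute (hcomm1.neg_left.neg_right).symm]
      congr 1
      rw [ha]
      abel
    have hBcomm : exp ((starRingEnd ℂ z) • N) * B = B * exp ((starRingEnd ℂ z) • N) :=
      ((hc.smul_left _).exp_left).eq
    have hmid : exp ((starRingEnd ℂ z) • N) * B * exp (-((starRingEnd ℂ z) • N)) = B := by
      rw [hBcomm, mul_assoc, exp_mul_exp_neg'', mul_one]
    have hFz : F z = exp a * B * exp (-a) := by
      rw [hF]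
      simp only
      rw [hsplit, hsplit2]
      calc exp a * exp ((starRingEnd ℂ z) • N) * B *
            (exp (-((starRingEnd ℂ z) • N)) * exp (-a))
          = exp a * (exp ((starRingEnd ℂ z) • N) * B *
              exp (-((starRingEnd ℂ z) • N))) * exp (-a) := by
            simp only [mul_assoc]
        _ = exp a * B * exp (-a) := by rw [hmid, mul_assoc]
    rw [hFz]
    have h1 : ‖exp a‖ ≤ 1 := norm_exp_skew_le' a hskew
    have h2 : ‖exp (-a)‖ ≤ 1 := by
      refine norm_exp_skew_le' _ ?_
      rw [star_neg, hskew, neg_neg]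
    calc ‖exp a * B * exp (-a)‖ ≤ ‖exp a * B‖ * ‖exp (-a)‖ := norm_mul_le _ _
      _ ≤ ‖exp a‖ * ‖B‖ * ‖exp (-a)‖ := by
          gcongr
          exact norm_mul_le _ _
      _ ≤ 1 * ‖B‖ * 1 := by gcongr
      _ = ‖B‖ := by ring
  have hdiff : Differentiable ℂ F := by
    have h1 : Differentiable ℂ fun z : ℂ => exp (z • star N) :=
      fun z => (hasDerivAt_exp_smul_const (star N) z).differentiableAt
    have h2 : Differentiable ℂ fun z : ℂ => exp (-(z • star N)) := by
      have he : (fun z : ℂ => exp (-(z • star N))) = fun z : ℂ => exp (z • (-star N)) := by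
        ext z; rw [smul_neg]
      rw [he]
      exact fun z => (hasDerivAt_exp_smul_const (-star N) z).differentiableAt
    exact (h1.mul (differentiable_const B)).mul h2
  have hconst : ∀ z : ℂ, F z = B := by
    intro z
    have h := hdiff.apply_eq_apply_of_bounded
      (isBounded_iff_forall_norm_le.2 ⟨‖B‖, by rintro x ⟨z, rfl⟩; exact hbound z⟩) z 0
    rw [h]
    simp [hF]
  have hcomm : ∀ z : ℂ, exp (z • star N) * B = B * exp (z • star N) := by
    intro z
    have h := hconst z
    calc exp (z • star N) * B
        = exp (z • star N) * B * (exp (-(z • star N)) * exp (z • star N)) := by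
          rw [exp_neg_mul_exp'', mul_one]
      _ = F z * exp (z • star N) := by rw [hF]; simp only [mul_assoc]
      _ = B * exp (z • star N) := by rw [h]
  have hd1 : HasDerivAt (fun z : ℂ => exp (z • star N) * B) (star N * B) 0 := by
    have h := (hasDerivAt_exp_smul_const' (star N) (0 : ℂ)).mul_const B
    simpa using h
  have hd2 : HasDerivAt (fun z : ℂ => exp (z • star N) * B) (B * star N) 0 := by
    have h := (hasDerivAt_exp_smul_const' (star N) (0 : ℂ)).const_mul B
    have h2 : HasDerivAt (fun z : ℂ => B * exp (z • star N)) (B * star N) 0 := by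
      simpa [mul_assoc] using h
    exact h2.congr_of_eventuallyEq (Filter.Eventually.of_forall fun z => (hcomm z))
  exact hd1.unique hd2

/-- Cauchy–Schwarz bound: `‖Σ Aⱼ* X Aⱼ‖ ≤ ‖Σ Aⱼ* Aⱼ‖ * ‖X‖`. -/
private lemma cs_bound' {H : Type*} [NormedAddCommGroup H] [InnerProductSpace ℂ H]
    [CompleteSpace H] {n : ℕ} (A : Fin n → H →L[ℂ] H) (X : H →L[ℂ] H) :
    ‖∑ j, adjoint (A j) * X * A j‖ ≤ ‖∑ j, adjoint (A j) * A j‖ * ‖X‖ := by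
  set S := ∑ j, adjoint (A j) * A j with hS
  have hSsum : ∀ ξ : H, ∑ j, ‖A j ξ‖ ^ 2 ≤ ‖S‖ * ‖ξ‖ ^ 2 := by
    intro ξ
    have h1 : ∑ j, ‖A j ξ‖ ^ 2 = RCLike.re (inner ℂ (S ξ) ξ : ℂ) := by
      rw [hS]
      simp only [ContinuousLinearMap.sum_apply, sum_inner, map_sum,
        ContinuousLinearMap.mul_apply, adjoint_inner_left]
      exact (Finset.sum_congr rfl fun j _ => (inner_self_eq_norm_sq (𝕜 := ℂ) (A j ξ)).symm)
    rw [h1]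
    calc RCLike.re (inner ℂ (S ξ) ξ : ℂ) ≤ ‖(inner ℂ (S ξ) ξ : ℂ)‖ := RCLike.re_le_norm _
      _ ≤ ‖S ξ‖ * ‖ξ‖ := norm_inner_le_norm _ _
      _ ≤ ‖S‖ * ‖ξ‖ * ‖ξ‖ := by gcongr; exact le_opNorm S ξ
      _ = ‖S‖ * ‖ξ‖ ^ 2 := by ring
  refine opNorm_le_bound _ (by positivity) fun ξ => ?_
  set w := (∑ j, adjoint (A j) * X * A j) ξ with hw
  have key : ‖w‖ ^ 2 ≤ ‖X‖ * (‖S‖ * ‖ξ‖ * ‖w‖) := by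
    have h1 : ‖w‖ ^ 2 = RCLike.re (inner ℂ w w : ℂ) := (inner_self_eq_norm_sq (𝕜 := ℂ) w).symm
    have h2 : (inner ℂ w w : ℂ) = ∑ j, (inner ℂ (X (A j ξ)) (A j w) : ℂ) := by
      rw [hw]
      simp only [ContinuousLinearMap.sum_apply, sum_inner, ContinuousLinearMap.mul_apply,
        adjoint_inner_left]
    have h3 : RCLike.re (inner ℂ w w : ℂ) ≤ ∑ j, ‖X (A j ξ)‖ * ‖A j w‖ := by
      rw [h2, map_sum]
      refine Finset.sum_le_sum fun j _ => ?_
      calc RCLike.re (inner ℂ (X (A j ξ)) (A j w) : ℂ)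
          ≤ ‖(inner ℂ (X (A j ξ)) (A j w) : ℂ)‖ := RCLike.re_le_norm _
        _ ≤ ‖X (A j ξ)‖ * ‖A j w‖ := norm_inner_le_norm _ _
    have h4 : ∑ j, ‖X (A j ξ)‖ * ‖A j w‖ ≤ ‖X‖ * ∑ j, ‖A j ξ‖ * ‖A j w‖ := by
      rw [Finset.mul_sum]
      refine Finset.sum_le_sum fun j _ => ?_
      rw [← mul_assoc]
      gcongr
      exact le_opNorm X (A j ξ)
    have h5 : ∑ j, ‖A j ξ‖ * ‖A j w‖ ≤ ‖S‖ * ‖ξ‖ * ‖w‖ := by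
      have hcs : (∑ j, ‖A j ξ‖ * ‖A j w‖) ^ 2 ≤
          (∑ j, ‖A j ξ‖ ^ 2) * ∑ j, ‖A j w‖ ^ 2 :=
        Finset.sum_mul_sq_le_sq_mul_sq Finset.univ _ _
      have hb : (∑ j, ‖A j ξ‖ ^ 2) * (∑ j, ‖A j w‖ ^ 2) ≤ (‖S‖ * ‖ξ‖ * ‖w‖) ^ 2 := by
        calc (∑ j, ‖A j ξ‖ ^ 2) * (∑ j, ‖A j w‖ ^ 2)
            ≤ (‖S‖ * ‖ξ‖ ^ 2) * (‖S‖ * ‖w‖ ^ 2) := by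
              refine mul_le_mul (hSsum ξ) (hSsum w) ?_ ?_ <;> positivity
          _ = (‖S‖ * ‖ξ‖ * ‖w‖) ^ 2 := by ring
      exact (abs_le_of_sq_le_sq' (hcs.trans hb) (by positivity)).2
    calc ‖w‖ ^ 2 = RCLike.re (inner ℂ w w : ℂ) := h1
      _ ≤ ∑ j, ‖X (A j ξ)‖ * ‖A j w‖ := h3
      _ ≤ ‖X‖ * ∑ j, ‖A j ξ‖ * ‖A j w‖ := h4
      _ ≤ ‖X‖ * (‖S‖ * ‖ξ‖ * ‖w‖) := by gcongr
  rcases eq_or_lt_of_le (norm_nonneg w) with hw0 | hw0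
  · rw [← hw0]
    positivity
  · have h := key
    rw [pow_two] at h
    have h2 : ‖w‖ ≤ ‖X‖ * (‖S‖ * ‖ξ‖) := by
      have := (mul_le_mul_iff_left₀ hw0).1 (by linarith [h] : ‖w‖ * ‖w‖ ≤ (‖X‖ * (‖S‖ * ‖ξ‖)) * ‖w‖)
      exact this
    calc ‖w‖ ≤ ‖X‖ * (‖S‖ * ‖ξ‖) := h2
      _ = ‖S‖ * ‖X‖ * ‖ξ‖ := by ring

/-- For a commuting family of normal operators `Aⱼ`, the spectral radius of the
elementary operator `X ↦ Σ Aⱼ* X Aⱼ` equals `‖Σ Aⱼ* Aⱼ‖`. -/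
theorem spectralRadius_elementary_operator_eq
    {H : Type*} [NormedAddCommGroup H] [InnerProductSpace ℂ H] [CompleteSpace H]
    (n : ℕ) (A : Fin n → H →L[ℂ] H)
    (hA : ∀ j, IsStarNormal (A j)) (hA' : ∀ i j, Commute (A i) (A j))
    (T : (H →L[ℂ] H) →L[ℂ] (H →L[ℂ] H))
    (hT : ∀ X, T X = ∑ j, adjoint (A j) * X * A j) :
    spectralRadius ℂ T = ‖∑ j, adjoint (A j) * A j‖₊ := by
  rcases subsingleton_or_nontrivial H with hH | hH
  · haveI : Subsingleton (H →L[ℂ] H) := ⟨fun a b => ContinuousLinearMap.ext fun x =>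
      Subsingleton.elim _ _⟩
    haveI : Subsingleton ((H →L[ℂ] H) →L[ℂ] (H →L[ℂ] H)) := ⟨fun a b =>
      ContinuousLinearMap.ext fun x => Subsingleton.elim _ _⟩
    have h1 : spectralRadius ℂ T = 0 := by
      rw [spectralRadius, spectrum.of_subsingleton]
      simp
    have h2 : (∑ j, adjoint (A j) * A j) = 0 := Subsingleton.elim _ _
    rw [h1, h2]
    simp
  -- nontrivial case
  set S := ∑ j, adjoint (A j) * A j with hS
  haveI : Nontrivial (H →L[ℂ] H) := by
    obtain ⟨x, hx⟩ := exists_ne (0 : H)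
    exact ⟨1, 0, fun h => hx (by simpa using DFunLike.congr_fun h x)⟩
  have hSsa : IsSelfAdjoint S := by
    rw [hS, IsSelfAdjoint]
    simp [star_sum, star_mul, ContinuousLinearMap.star_eq_adjoint, adjoint_adjoint]
  have hcommS : ∀ j, Commute (A j) S := by
    intro j
    rw [hS]
    refine Commute.sum_right _ _ _ fun i _ => ?_
    have h1 : Commute (adjoint (A i)) (A j) := by
      have h := fuglede' (hA i) (hA' i j)
      rwa [ContinuousLinearMap.star_eq_adjoint] at h
    exact h1.symm.mul_right (hA' j i)
  have hTpow1 : ∀ k : ℕ, (T ^ k) 1 = S ^ k := by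
    intro k
    induction k with
    | zero => simp
    | succ k ih =>
      rw [pow_succ' T k, ContinuousLinearMap.mul_apply, ih, hT]
      have he : ∀ j : Fin n, adjoint (A j) * S ^ k * A j = adjoint (A j) * A j * S ^ k := by
        intro j
        rw [mul_assoc, mul_assoc, ← ((hcommS j).pow_right k).eq]
      rw [Finset.sum_congr rfl fun j _ => he j, ← Finset.sum_mul, ← hS, ← pow_succ' S k]
  have hTnorm : ‖T‖ ≤ ‖S‖ := by
    refine opNorm_le_bound T (norm_nonneg S) fun X => ?_
    rw [hT]
    exact cs_bound' A X
  have hupper : ∀ k : ℕ, ‖T ^ k‖ ≤ ‖S‖ ^ k := fun k =>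
    (norm_pow_le T k).trans (pow_le_pow_left₀ (norm_nonneg T) hTnorm k)
  have hlower : ∀ k : ℕ, ‖S ^ k‖ ≤ ‖T ^ k‖ := by
    intro k
    have h := (T ^ k).le_opNorm (1 : H →L[ℂ] H)
    rwa [hTpow1, norm_one, mul_one] at h
  have heq : ∀ m : ℕ, ‖T ^ 2 ^ m‖₊ = ‖S‖₊ ^ 2 ^ m := by
    intro m
    have hSpow : ‖S ^ 2 ^ m‖₊ = ‖S‖₊ ^ 2 ^ m := hSsa.nnnorm_pow_two_pow m
    have hSpow' : ‖S ^ 2 ^ m‖ = ‖S‖ ^ 2 ^ m := by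
      rw [← coe_nnnorm, hSpow, NNReal.coe_pow, coe_nnnorm]
    have hle : ‖T ^ 2 ^ m‖ = ‖S‖ ^ 2 ^ m :=
      le_antisymm (hupper _) (hSpow' ▸ hlower (2 ^ m))
    ext
    rw [coe_nnnorm, hle]
    simp
  have hG := spectrum.pow_nnnorm_pow_one_div_tendsto_nhds_spectralRadius T
  have hsub : Filter.Tendsto (fun m : ℕ => 2 ^ m) Filter.atTop Filter.atTop :=
    tendsto_pow_atTop_atTop_of_one_lt one_lt_two
  have h2 := hG.comp hsub
  have hcst : ((fun k : ℕ => (‖T ^ k‖₊ : ENNReal) ^ (1 / k : ℝ)) ∘ fun m : ℕ => 2 ^ m) =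
      fun _ : ℕ => (‖S‖₊ : ENNReal) := by
    funext m
    simp only [Function.comp_apply]
    rw [heq m, ENNReal.coe_pow, ← ENNReal.rpow_natCast, ← ENNReal.rpow_mul]
    rw [mul_one_div, div_self (by positivity), ENNReal.rpow_one]
  rw [hcst] at h2
  exact (tendsto_nhds_unique h2 tendsto_const_nhds)
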